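/- Let n ≥ 1 be a natural number, let a, τ, q ∈ ℝ and β ∈ ℝ, and let d : ZMod n → ℝ satisfy d k > 0 for all k and the orbit condition d(k+1) = τ·d(k) − q·d(k−1) + a for all k ∈ ZMod n. Define the n×n complex matrix W by W k l = exp(iβ)·√(d k) if l = k + 1 and W k l = 0 otherwise (indices in ZMod n), and set V = Wᴴ (the conjugate transpose). Then W and V satisfy the defining relations of C_{L,a}: W·W·V = a•W − q•(V·W·W) + τ•(W·V·W) and W·V·V = a•V − q•(V·V·W) + τ•(V·W·V). -/
import Mathlib


open scoped Matrix

/-- a periodic orbit of the affine map `L̂(x,y) = (τx − qy + a, x)` in the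
open positive quadrant induces an `n`-dimensional loop ∗-representation of `C_{L,a}`
given by a cyclic weighted shift matrix. -/
theorem stmt_16 (n : ℕ) [NeZero n] (hn : 1 ≤ n) (a τ q β : ℝ)
    (d : ZMod n → ℝ) (hd : ∀ k, 0 < d k)
    (horbit : ∀ k : ZMod n, d (k + 1) = τ * d k - q * d (k - 1) + a)
    (W : Matrix (ZMod n) (ZMod n) ℂ)
    (hW : ∀ k l : ZMod n,
      W k l = if l = k + 1 then Complex.exp (β * Complex.I) * (Real.sqrt (d k) : ℂ) else 0) :
    W * W * Wᴴ = a • W - q • (Wᴴ * W * W) + τ • (W * Wᴴ * W) ∧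
    W * Wᴴ * Wᴴ = a • Wᴴ - q • (Wᴴ * Wᴴ * W) + τ • (Wᴴ * W * Wᴴ) := by
  set c : ℂ := Complex.exp (β * Complex.I) with hc
  have hcc : (starRingEnd ℂ) c * c = 1 := by
    rw [hc, ← Complex.exp_conj, ← Complex.exp_add]
    simp
  have hsq : ∀ k : ZMod n, (Real.sqrt (d k) : ℂ) * (Real.sqrt (d k) : ℂ) = (d k : ℂ) := by
    intro k
    rw [← Complex.ofReal_mul, Real.mul_self_sqrt (hd k).le]
  have hWH : ∀ k l : ZMod n,
      Wᴴ k l = if k = l + 1 then (starRingEnd ℂ) c * (Real.sqrt (d l) : ℂ) else 0 := by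
    intro k l
    simp [Matrix.conjTranspose_apply, hW l k]
    split <;> simp
  have h1 : W * Wᴴ = Matrix.diagonal (fun k => (d k : ℂ)) := by
    ext k l
    rw [Matrix.mul_apply]
    simp only [hW, hWH]
    rw [Finset.sum_eq_single (k + 1)]
    · by_cases h : l = k
      · subst h
        rw [if_pos rfl, if_pos rfl, mul_mul_mul_comm, mul_comm c, hcc, one_mul, hsq,
          Matrix.diagonal_apply_eq]
      · have h2 : ¬ (k + 1 = l + 1) := fun hh => h (add_right_cancel hh).symm
        rw [if_pos rfl, if_neg h2, mul_zero, Matrix.diagonal_apply_ne _ (Ne.symm h)]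
    · intro b _ hb
      rw [if_neg hb, zero_mul]
    · intro h; exact absurd (Finset.mem_univ _) h
  have h2 : Wᴴ * W = Matrix.diagonal (fun k => (d (k - 1) : ℂ)) := by
    ext k l
    rw [Matrix.mul_apply]
    simp only [hW, hWH]
    rw [Finset.sum_eq_single (k - 1)]
    · have e1 : k = (k - 1) + 1 := by ring
      by_cases h : l = k
      · subst h
        rw [if_pos e1, if_pos e1, mul_mul_mul_comm, hcc, one_mul, hsq,
          Matrix.diagonal_apply_eq]
      · have h2 : ¬ (k = l) := h ∘ Eq.symm
        rw [if_pos e1]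
        rw [if_neg (show ¬ (l = k - 1 + 1) by rw [← e1]; exact h), mul_zero,
          Matrix.diagonal_apply_ne _ (Ne.symm h)]
    · intro b _ hb
      rw [if_neg (fun hh => hb (by rw [hh]; ring)), zero_mul]
    · intro h; exact absurd (Finset.mem_univ _) h
  have key : ∀ k : ZMod n, (d (k+1) : ℂ) = τ * d k - q * d (k-1) + a := by
    intro k; exact_mod_cast congrArg Complex.ofReal (horbit k)
  have rel1 : W * W * Wᴴ = a • W - q • (Wᴴ * W * W) + τ • (W * Wᴴ * W) := by
    rw [mul_assoc W W Wᴴ, h1, h2]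
    ext k l
    simp only [Matrix.mul_diagonal, Matrix.diagonal_mul, Matrix.smul_apply, Matrix.sub_apply,
      Matrix.add_apply, Complex.real_smul]
    rw [hW k l]
    by_cases h : l = k + 1
    · subst h
      rw [if_pos rfl]
      have hk := key k
      linear_combination (c * (Real.sqrt (d k) : ℂ)) * hk
    · rw [if_neg h]; ring
  refine ⟨rel1, ?_⟩
  have h3 := congrArg Matrix.conjTranspose rel1
  simp only [Matrix.conjTranspose_mul, Matrix.conjTranspose_sub, Matrix.conjTranspose_add,
    Matrix.conjTranspose_smul, Matrix.conjTranspose_conjTranspose, star_trivial] at h3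
  simpa only [mul_assoc] using h3
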